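/- arXiv:1210.7559 — 2 statements merged into one kernel-verified Lean document; each statement's English description precedes it below -/
import Mathlib

section
/- Assume ‖Ẽ(I,u,u)‖ ≤ ε̃ for every unit vector u ∈ ℝ^k. Let θ be a unit vector with coordinates θ_i := ⟨v_i,θ⟩, indexed so that λ̃_1|θ_1| = max_i λ̃_i|θ_i| > 0 and θ_1² < 1; assume 0 ≤ δ(θ) < 1/2 and γ(θ) > 0. Pick any β > α > 0 such that α/((1+α)(1+α²)) ≥ ε̃/(γ(θ)·λ̃_1) and α/(2(1+α)(1+β²)) ≥ ε̃/λ̃_1. Let θ' := T̃(I,θ,θ)/‖T̃(I,θ,θ)‖ (assumed well-defined), and write R := R(θ), R' := R(θ'). Then: (1) if R ≥ 1/α, then R' ≥ 1/α; (2) if 1/β ≤ R < 1/α, then R' ≥ min{R²/(2κ), 1/α}. -/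
open scoped BigOperators

noncomputable section

/-- Euclidean dot product on `ℝ^k`. -/
def dotp {k : ℕ} (u v : Fin k → ℝ) : ℝ := ∑ i, u i * v i

/-- Euclidean norm on `ℝ^k`. -/
def enorm' {k : ℕ} (u : Fin k → ℝ) : ℝ := Real.sqrt (∑ i, (u i) ^ 2)

/-- Third-order tensors on `ℝ^k`, as `k × k × k` arrays. -/
abbrev Tensor3 (k : ℕ) := Fin k → Fin k → Fin k → ℝ

/-- Symmetry of a third-order tensor (invariance under index permutations). -/
def Symm3 {k : ℕ} (A : Tensor3 k) : Prop :=
  ∀ a b c, A a b c = A b a c ∧ A a b c = A a c b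

/-- Evaluation `A(x,y,z)` of a third-order tensor. -/
def tapp {k : ℕ} (A : Tensor3 k) (x y z : Fin k → ℝ) : ℝ :=
  ∑ a, ∑ b, ∑ c, A a b c * x a * y b * z c

/-- `A(I,u,u)` as a vector. -/
def tvec {k : ℕ} (A : Tensor3 k) (u : Fin k → ℝ) : Fin k → ℝ :=
  fun a => ∑ b, ∑ c, A a b c * u b * u c

/-- `T̃(x,y,z) = ∑ i, λ̃ i ⟨v i, x⟩⟨v i, y⟩⟨v i, z⟩ + Ẽ(x,y,z)`. -/
def Tapp {k : ℕ} (lam : Fin k → ℝ) (v : Fin k → Fin k → ℝ) (E : Tensor3 k)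
    (x y z : Fin k → ℝ) : ℝ :=
  (∑ i, lam i * (dotp (v i) x * (dotp (v i) y * dotp (v i) z))) + tapp E x y z

/-- `T̃(I,u,u)` as a vector. -/
def Tvec {k : ℕ} (lam : Fin k → ℝ) (v : Fin k → Fin k → ℝ) (E : Tensor3 k)
    (u : Fin k → ℝ) : Fin k → ℝ :=
  (∑ i, (lam i * (dotp (v i) u) ^ 2) • v i) + tvec E u

/-- `R(θ) = (θ₁²/(1−θ₁²))^{1/2}` where `θ_i = ⟨v i, θ⟩` and the distinguished (max)
index is `0`. -/
def Rq {k : ℕ} [NeZero k] (v : Fin k → Fin k → ℝ) (θ : Fin k → ℝ) : ℝ :=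
  Real.sqrt ((dotp (v 0) θ) ^ 2 / (1 - (dotp (v 0) θ) ^ 2))

/-- `r_i(θ) = λ̃₁θ₁/(λ̃_i|θ_i|)` with the distinguished (max) index `0`. -/
def rq {k : ℕ} [NeZero k] (lam : Fin k → ℝ) (v : Fin k → Fin k → ℝ)
    (θ : Fin k → ℝ) (i : Fin k) : ℝ :=
  lam 0 * dotp (v 0) θ / (lam i * |dotp (v i) θ|)

/-- `γ(θ) = 1 − 1/min{|r_i(θ)| : i ≠ 0, λ̃_i|θ_i| > 0}` (and `1` if this set is empty). -/
def gammaq {k : ℕ} [NeZero k] (lam : Fin k → ℝ) (v : Fin k → Fin k → ℝ)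
    (θ : Fin k → ℝ) : ℝ :=
  if h : (Finset.univ.filter fun i : Fin k =>
      i ≠ 0 ∧ 0 < lam i * |dotp (v i) θ|).Nonempty then
    1 - ((Finset.univ.filter fun i : Fin k =>
        i ≠ 0 ∧ 0 < lam i * |dotp (v i) θ|).inf' h fun i => |rq lam v θ i|)⁻¹
  else 1

/-- `δ(θ) = ε̃/(λ̃₁θ₁²)` with the distinguished (max) index `0`. -/
def deltaq {k : ℕ} [NeZero k] (lam : Fin k → ℝ) (v : Fin k → Fin k → ℝ) (εt : ℝ)
    (θ : Fin k → ℝ) : ℝ :=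
  εt / (lam 0 * (dotp (v 0) θ) ^ 2)

/-- `κ = λ̃_max/λ̃₁` with the distinguished (max) index `0`. -/
def kappaq {k : ℕ} [NeZero k] (lam : Fin k → ℝ) : ℝ :=
  (Finset.univ.sup' Finset.univ_nonempty lam) / lam 0


lemma dotp_add {k : ℕ} (u x y : Fin k → ℝ) : dotp u (x + y) = dotp u x + dotp u y := by
  simp [dotp, Finset.sum_add_distrib, mul_add]

lemma dotp_smul {k : ℕ} (u : Fin k → ℝ) (r : ℝ) (x : Fin k → ℝ) :
    dotp u (r • x) = r * dotp u x := by
  simp only [dotp, Pi.smul_apply, smul_eq_mul, Finset.mul_sum]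
  exact Finset.sum_congr rfl fun i _ => by ring

lemma dotp_sum {k : ℕ} {ι : Type*} (u : Fin k → ℝ) (s : Finset ι) (f : ι → Fin k → ℝ) :
    dotp u (∑ i ∈ s, f i) = ∑ i ∈ s, dotp u (f i) := by
  simp [dotp, Finset.mul_sum]
  rw [Finset.sum_comm]

lemma sq_enorm' {k : ℕ} (u : Fin k → ℝ) : (enorm' u) ^ 2 = ∑ i, (u i) ^ 2 :=
  Real.sq_sqrt (Finset.sum_nonneg fun i _ => sq_nonneg _)

lemma enorm'_pos {k : ℕ} {u : Fin k → ℝ} (h : u ≠ 0) : 0 < enorm' u := by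
  rw [enorm', Real.sqrt_pos]
  rcases (Finset.sum_nonneg (fun i (_ : i ∈ Finset.univ) => sq_nonneg (u i))).lt_or_eq with h' | h'
  · exact h'
  · exfalso; apply h; funext i
    have := (Finset.sum_eq_zero_iff_of_nonneg (fun i _ => sq_nonneg (u i))).mp h'.symm i (by simp)
    have := sq_eq_zero_iff.mp this
    simpa using this

lemma parseval {k : ℕ} {v : Fin k → Fin k → ℝ}
    (horth : ∀ i j, dotp (v i) (v j) = if i = j then 1 else 0) (u : Fin k → ℝ) :
    ∑ j, (dotp (v j) u) ^ 2 = ∑ i, (u i) ^ 2 := by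
  have hV : (Matrix.of v) * (Matrix.of v).transpose = 1 := by
    ext i j
    simpa [Matrix.mul_apply, Matrix.one_apply, dotp] using horth i j
  have hV2 : (Matrix.of v).transpose * (Matrix.of v) = 1 := mul_eq_one_comm.mp hV
  have hcol : ∀ a b, (∑ j, v j a * v j b) = if a = b then 1 else 0 := by
    intro a b
    have := congrFun (congrFun hV2 a) b
    simpa [Matrix.mul_apply, Matrix.one_apply] using this
  calc ∑ j, (dotp (v j) u) ^ 2
      = ∑ j, ∑ a, ∑ b, (v j a * u a) * (v j b * u b) := by
        simp [dotp, sq, Finset.sum_mul_sum]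
    _ = ∑ a, ∑ b, (∑ j, v j a * v j b) * (u a * u b) := by
        rw [Finset.sum_comm]
        refine Finset.sum_congr rfl fun a _ => ?_
        rw [Finset.sum_comm]
        refine Finset.sum_congr rfl fun b _ => ?_
        rw [Finset.sum_mul]
        refine Finset.sum_congr rfl fun j _ => by ring
    _ = ∑ a, (u a) ^ 2 := by
        refine Finset.sum_congr rfl fun a _ => ?_
        rw [Finset.sum_eq_single a]
        · rw [hcol a a]; simp [sq]
        · intro b _ hb
          rw [hcol a b, if_neg (fun h => hb h.symm)]; ring
        · simp

lemma sqrt_sum_add_sq_le {ι : Type*} (s : Finset ι) (f g : ι → ℝ) :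
    Real.sqrt (∑ i ∈ s, (f i + g i) ^ 2) ≤
      Real.sqrt (∑ i ∈ s, f i ^ 2) + Real.sqrt (∑ i ∈ s, g i ^ 2) := by
  rw [Real.sqrt_le_iff]
  constructor
  · positivity
  · have hcs : (∑ i ∈ s, f i * g i) ≤ Real.sqrt (∑ i ∈ s, f i ^ 2) * Real.sqrt (∑ i ∈ s, g i ^ 2) := by
      have h1 := Finset.sum_mul_sq_le_sq_mul_sq s f g
      have h2 : (∑ i ∈ s, f i * g i) ≤ |∑ i ∈ s, f i * g i| := le_abs_self _
      have h3 : |∑ i ∈ s, f i * g i| = Real.sqrt ((∑ i ∈ s, f i * g i) ^ 2) :=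
        (Real.sqrt_sq_eq_abs _).symm
      calc (∑ i ∈ s, f i * g i) ≤ Real.sqrt ((∑ i ∈ s, f i * g i) ^ 2) := h3 ▸ h2
        _ ≤ Real.sqrt ((∑ i ∈ s, f i ^ 2) * ∑ i ∈ s, g i ^ 2) := Real.sqrt_le_sqrt h1
        _ = _ := Real.sqrt_mul (Finset.sum_nonneg fun i _ => sq_nonneg _) _
    have e1 : ∑ i ∈ s, (f i + g i) ^ 2 = (∑ i ∈ s, f i ^ 2) + 2 * (∑ i ∈ s, f i * g i) + ∑ i ∈ s, g i ^ 2 := by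
      rw [Finset.mul_sum, ← Finset.sum_add_distrib, ← Finset.sum_add_distrib]
      exact Finset.sum_congr rfl fun i _ => by ring
    have q1 := Real.sq_sqrt (Finset.sum_nonneg fun i (_ : i ∈ s) => sq_nonneg (f i))
    have q2 := Real.sq_sqrt (Finset.sum_nonneg fun i (_ : i ∈ s) => sq_nonneg (g i))
    nlinarith [hcs, e1, q1, q2]

set_option maxHeartbeats 1600000 in
/-- **Growth of `R` in the quadratic convergence regime (Lemma on `R`).**
Assume `0 ≤ δ(θ) < 1/2`, `γ(θ) > 0`, and `β > α > 0` with
`α/((1+α)(1+α²)) ≥ ε̃/(γ(θ)λ̃₁)` and `α/(2(1+α)(1+β²)) ≥ ε̃/λ̃₁`.  Then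
(1) if `R(θ) ≥ 1/α` then `R(θ') ≥ 1/α`;
(2) if `1/β ≤ R(θ) < 1/α` then `R(θ') ≥ min{R(θ)²/(2κ), 1/α}`.
(`R(θ') = +∞`, i.e. `θ'₁² = 1`, is covered by the first disjuncts.) -/
theorem stmt15 {k : ℕ} [NeZero k]
    (lam : Fin k → ℝ) (hlam : ∀ i, 0 ≤ lam i)
    (v : Fin k → Fin k → ℝ)
    (horth : ∀ i j, dotp (v i) (v j) = if i = j then 1 else 0)
    (E : Tensor3 k) (hE : Symm3 E)
    (εt : ℝ)
    (hEnorm : ∀ u : Fin k → ℝ, enorm' u = 1 → enorm' (tvec E u) ≤ εt)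
    (θ : Fin k → ℝ) (hθ : enorm' θ = 1)
    (hmaxθ : ∀ i, lam i * |dotp (v i) θ| ≤ lam 0 * |dotp (v 0) θ|)
    (hposθ : 0 < lam 0 * |dotp (v 0) θ|)
    (hθ1 : (dotp (v 0) θ) ^ 2 < 1)
    (hδ0 : 0 ≤ deltaq lam v εt θ) (hδ : deltaq lam v εt θ < 1 / 2)
    (hγ : 0 < gammaq lam v θ)
    (α β : ℝ) (hα : 0 < α) (hαβ : α < β)
    (h1 : α / ((1 + α) * (1 + α ^ 2)) ≥ εt / (gammaq lam v θ * lam 0))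
    (h2 : α / (2 * (1 + α) * (1 + β ^ 2)) ≥ εt / lam 0)
    (hne : Tvec lam v E θ ≠ 0)
    (θ' : Fin k → ℝ) (hθ' : θ' = (enorm' (Tvec lam v E θ))⁻¹ • Tvec lam v E θ) :
    (Rq v θ ≥ 1 / α →
      (dotp (v 0) θ') ^ 2 = 1 ∨ Rq v θ' ≥ 1 / α) ∧
    (1 / β ≤ Rq v θ → Rq v θ < 1 / α →
      (dotp (v 0) θ') ^ 2 = 1 ∨
        Rq v θ' ≥ min ((Rq v θ) ^ 2 / (2 * kappaq lam)) (1 / α)) := by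
  -- basic positivity
  have hl0 : 0 < lam 0 := by
    rcases (hlam 0).lt_or_eq with h | h
    · exact h
    · exfalso; rw [← h] at hposθ; simp at hposθ
  have ht0 : dotp (v 0) θ ≠ 0 := by
    intro h; rw [h] at hposθ; simp at hposθ
  set t0 : ℝ := dotp (v 0) θ with ht0def
  have ht0sq : 0 < t0 ^ 2 := by positivity
  have h1mc : 0 < 1 - t0 ^ 2 := by linarith
  have hdpos : 0 < lam 0 * t0 ^ 2 := by positivity
  have hεt : 0 ≤ εt := by
    have := (le_div_iff₀ hdpos).mp hδ0; linarith
  have hδ' : 2 * εt < lam 0 * t0 ^ 2 := by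
    have := (div_lt_iff₀ hdpos).mp hδ; linarith
  -- coordinates
  have hsumc : ∑ j, (dotp (v j) θ) ^ 2 = 1 := by
    rw [parseval horth θ, ← sq_enorm' θ, hθ]; norm_num
  set e : Fin k → ℝ := fun j => dotp (v j) (tvec E θ) with hedef
  have hesq : ∑ j, (e j) ^ 2 ≤ εt ^ 2 := by
    rw [hedef]
    simp only
    rw [parseval horth (tvec E θ), ← sq_enorm' (tvec E θ)]
    have h := hEnorm θ hθ
    have h0 : 0 ≤ enorm' (tvec E θ) := Real.sqrt_nonneg _
    exact pow_le_pow_left₀ h0 h 2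
  have coordT : ∀ j, dotp (v j) (Tvec lam v E θ) = lam j * (dotp (v j) θ) ^ 2 + e j := by
    intro j
    rw [Tvec, dotp_add, dotp_sum]
    congr 1
    rw [Finset.sum_eq_single j]
    · rw [dotp_smul, horth j j]; simp
    · intro i _ hij
      rw [dotp_smul, horth j i, if_neg (fun h => hij h.symm)]; ring
    · simp
  set M : ℝ := enorm' (Tvec lam v E θ) with hMdef
  have hM : 0 < M := enorm'_pos hne
  set N : ℝ := lam 0 * t0 ^ 2 + e 0 with hNdef
  set D2 : ℝ := ∑ j ∈ Finset.univ.erase 0, (lam j * (dotp (v j) θ) ^ 2 + e j) ^ 2 with hD2def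
  have hD2nn : 0 ≤ D2 := Finset.sum_nonneg fun i _ => sq_nonneg _
  have hMND : M ^ 2 = N ^ 2 + D2 := by
    rw [hMdef, sq_enorm', ← parseval horth]
    rw [← Finset.add_sum_erase _ _ (Finset.mem_univ (0 : Fin k))]
    rw [coordT 0, hD2def]
    congr 1
    exact Finset.sum_congr rfl fun j _ => by rw [coordT j]
  have he0 : -εt ≤ e 0 := by
    have h : e 0 ^ 2 ≤ ∑ j, (e j) ^ 2 := by
      simpa using Finset.single_le_sum (f := fun j => (e j) ^ 2) (fun i _ => sq_nonneg _)
        (Finset.mem_univ 0)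
    nlinarith [sq_nonneg (e 0 + εt)]
  have hNlow : lam 0 * t0 ^ 2 - εt ≤ N := by rw [hNdef]; linarith
  have hNpos : 0 < N := by linarith
  have coordθ' : ∀ j, dotp (v j) θ' = M⁻¹ * (lam j * (dotp (v j) θ) ^ 2 + e j) := by
    intro j; rw [hθ', dotp_smul, coordT j]
  -- gamma facts
  set γ : ℝ := gammaq lam v θ with hγdef
  have hγfacts : γ ≤ 1 ∧ ∀ j, j ≠ 0 →
      lam j * |dotp (v j) θ| ≤ (1 - γ) * (lam 0 * |t0|) := by
    rw [hγdef, gammaq]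
    by_cases h : (Finset.univ.filter fun i : Fin k =>
        i ≠ 0 ∧ 0 < lam i * |dotp (v i) θ|).Nonempty
    · rw [dif_pos h]
      set S := Finset.univ.filter fun i : Fin k =>
        i ≠ 0 ∧ 0 < lam i * |dotp (v i) θ| with hS
      set m := S.inf' h fun i => |rq lam v θ i| with hm
      have habs : |lam 0 * t0| = lam 0 * |t0| := by
        rw [abs_mul, abs_of_nonneg (hlam 0)]
      have hrq : ∀ i ∈ S, |rq lam v θ i| = (lam 0 * |t0|) / (lam i * |dotp (v i) θ|) := by
        intro i hi
        rw [hS, Finset.mem_filter] at hi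
        rw [rq, abs_div, habs, abs_of_pos hi.2.2]
      have hm1 : 1 ≤ m := by
        rw [hm]
        apply Finset.le_inf'
        intro i hi
        rw [hrq i hi]
        rw [hS, Finset.mem_filter] at hi
        rw [le_div_iff₀ hi.2.2]
        simpa using hmaxθ i
      have hmpos : 0 < m := lt_of_lt_of_le one_pos hm1
      constructor
      · have : 0 ≤ m⁻¹ := by positivity
        linarith
      · intro j hj
        simp only [sub_sub_cancel]
        rcases (mul_nonneg (hlam j) (abs_nonneg (dotp (v j) θ))).lt_or_eq with hpos | hzero
        · have hjS : j ∈ S := by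
            rw [hS, Finset.mem_filter]
            exact ⟨Finset.mem_univ j, hj, hpos⟩
          have hle : m ≤ (lam 0 * |t0|) / (lam j * |dotp (v j) θ|) := by
            rw [← hrq j hjS]
            exact Finset.inf'_le _ hjS
          rw [le_div_iff₀ hpos] at hle
          calc lam j * |dotp (v j) θ| = m⁻¹ * (m * (lam j * |dotp (v j) θ|)) := by
                field_simp
            _ ≤ m⁻¹ * (lam 0 * |t0|) := by
                apply mul_le_mul_of_nonneg_left _ (by positivity)
                linarith
        · rw [← hzero]
          positivity
    · rw [dif_neg h]
      constructor
      · norm_num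
      · intro j hj
        rw [Finset.not_nonempty_iff_eq_empty, Finset.filter_eq_empty_iff] at h
        have := h (Finset.mem_univ j)
        simp only [not_and] at this
        have h0 : ¬ (0 < lam j * |dotp (v j) θ|) := this hj
        push_neg at h0
        simp only [sub_self, zero_mul]
        exact h0
  obtain ⟨hγ1, hkey⟩ := hγfacts
  -- sum of squares of coordinates off 0
  have hsumoff : ∑ j ∈ Finset.univ.erase 0, (dotp (v j) θ) ^ 2 = 1 - t0 ^ 2 := by
    have h : (dotp (v 0) θ) ^ 2 + ∑ j ∈ Finset.univ.erase 0, (dotp (v j) θ) ^ 2 = 1 := by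
      rw [Finset.add_sum_erase Finset.univ (fun j => (dotp (v j) θ) ^ 2)
        (Finset.mem_univ (0 : Fin k))]
      exact hsumc
    rw [← ht0def] at h
    linarith
  have hEoff : Real.sqrt (∑ j ∈ Finset.univ.erase 0, (e j) ^ 2) ≤ εt := by
    rw [Real.sqrt_le_iff]
    refine ⟨hεt, le_trans ?_ hesq⟩
    exact Finset.sum_le_sum_of_subset_of_nonneg (Finset.erase_subset _ _)
      (fun i _ _ => sq_nonneg _)
  -- translation of Rq hypotheses
  have hRqθ : Rq v θ = Real.sqrt (t0 ^ 2 / (1 - t0 ^ 2)) := rfl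
  -- main case analysis machinery
  by_cases hD2z : D2 = 0
  · -- θ'₀² = 1 branch
    have hθ'0 : (dotp (v 0) θ') ^ 2 = 1 := by
      rw [coordθ' 0, ← hNdef, mul_pow]
      rw [hD2z, add_zero] at hMND
      rw [← hMND]
      field_simp
    exact ⟨fun _ => Or.inl hθ'0, fun _ _ => Or.inl hθ'0⟩
  · have hD2pos : 0 < D2 := lt_of_le_of_ne hD2nn (Ne.symm hD2z)
    have hRq' : Rq v θ' = Real.sqrt (N ^ 2 / D2) := by
      rw [Rq, coordθ' 0, ← hNdef]
      congr 1
      have hMne : M ≠ 0 := ne_of_gt hM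
      have h1' : (M⁻¹ * N) ^ 2 = N ^ 2 / M ^ 2 := by field_simp
      rw [h1']
      have h2' : 1 - N ^ 2 / M ^ 2 = D2 / M ^ 2 := by
        field_simp
        linarith [hMND]
      rw [h2']
      rw [div_div_div_cancel_right₀]
      exact pow_ne_zero 2 hMne
    -- generic reduction: to show b ≤ Rq v θ' given bound on sqrt D2
    have main : ∀ b K : ℝ, 0 ≤ b → Real.sqrt D2 ≤ K → b * K ≤ N → b ≤ Rq v θ' := by
      intro b K hb hK hbK
      rw [hRq', Real.le_sqrt hb (by positivity)]
      rw [le_div_iff₀ hD2pos]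
      have hs := Real.sq_sqrt hD2nn
      have hsn := Real.sqrt_nonneg D2
      have hh : b * Real.sqrt D2 ≤ N := le_trans (mul_le_mul_of_nonneg_left hK hb) hbK
      have key : b ^ 2 * D2 = (b * Real.sqrt D2) * (b * Real.sqrt D2) := by
        conv_lhs => rw [← hs]
        ring
      calc b ^ 2 * D2 = (b * Real.sqrt D2) * (b * Real.sqrt D2) := key
        _ ≤ N * N := mul_self_le_mul_self (mul_nonneg hb hsn) hh
        _ = N ^ 2 := (sq N).symm
    constructor
    · -- Part 1
      intro hR
      right
      rw [hRqθ] at hR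
      have hc1 : 1 ≤ (1 + α ^ 2) * t0 ^ 2 := by
        have := (Real.le_sqrt (by positivity) (by positivity)).mp hR
        rw [le_div_iff₀ h1mc] at this
        have hα2 : (1/α) ^ 2 * (1 - t0 ^ 2) ≤ t0 ^ 2 := this
        have h3 := mul_le_mul_of_nonneg_right hα2 (sq_nonneg α)
        have h4 : (1/α) ^ 2 * (1 - t0 ^ 2) * α ^ 2 = 1 - t0 ^ 2 := by
          have hαne : α ≠ 0 := ne_of_gt hα
          field_simp
        rw [h4] at h3
        linarith [h3]
      have h1γ : 0 ≤ 1 - γ := by linarith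
      have hLnn : 0 ≤ (1 - γ) * (lam 0 * |t0|) := by positivity
      have hKD : Real.sqrt D2 ≤ (1 - γ) * (lam 0 * |t0|) * Real.sqrt (1 - t0 ^ 2) + εt := by
        have hmink := sqrt_sum_add_sq_le (Finset.univ.erase 0)
          (fun j => lam j * (dotp (v j) θ) ^ 2) e
        have hfsum : ∑ j ∈ Finset.univ.erase 0, (lam j * (dotp (v j) θ) ^ 2) ^ 2 ≤
            ((1 - γ) * (lam 0 * |t0|)) ^ 2 * (1 - t0 ^ 2) := by
          rw [← hsumoff, Finset.mul_sum]
          apply Finset.sum_le_sum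
          intro j hj
          have hj0 : j ≠ 0 := (Finset.mem_erase.mp hj).1
          have hk := hkey j hj0
          have habs : (lam j * (dotp (v j) θ) ^ 2) ^ 2 =
              (lam j * |dotp (v j) θ|) ^ 2 * (dotp (v j) θ) ^ 2 := by
            rw [mul_pow, mul_pow, sq_abs]; ring
          rw [habs]
          apply mul_le_mul_of_nonneg_right _ (sq_nonneg _)
          exact pow_le_pow_left₀ (mul_nonneg (hlam j) (abs_nonneg _)) hk 2
        have hf : Real.sqrt (∑ j ∈ Finset.univ.erase 0, (lam j * (dotp (v j) θ) ^ 2) ^ 2) ≤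
            (1 - γ) * (lam 0 * |t0|) * Real.sqrt (1 - t0 ^ 2) := by
          calc Real.sqrt (∑ j ∈ Finset.univ.erase 0, (lam j * (dotp (v j) θ) ^ 2) ^ 2)
              ≤ Real.sqrt (((1 - γ) * (lam 0 * |t0|)) ^ 2 * (1 - t0 ^ 2)) :=
                Real.sqrt_le_sqrt hfsum
            _ = (1 - γ) * (lam 0 * |t0|) * Real.sqrt (1 - t0 ^ 2) := by
                rw [Real.sqrt_mul (sq_nonneg _), Real.sqrt_sq hLnn]
        calc Real.sqrt D2 ≤ _ := hmink
          _ ≤ (1 - γ) * (lam 0 * |t0|) * Real.sqrt (1 - t0 ^ 2) + εt := add_le_add hf hEoff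
      apply main (1 / α) _ (by positivity) hKD
      have hs1le : Real.sqrt (1 - t0 ^ 2) ≤ α * |t0| := by
        have h' : 1 - t0 ^ 2 ≤ (α * |t0|) ^ 2 := by
          rw [mul_pow, sq_abs]; nlinarith
        calc Real.sqrt (1 - t0 ^ 2) ≤ Real.sqrt ((α * |t0|) ^ 2) := Real.sqrt_le_sqrt h'
          _ = α * |t0| := Real.sqrt_sq (by positivity)
      have h1' : εt * ((1 + α) * (1 + α ^ 2)) ≤ α * (γ * lam 0) := by
        have hd1 : 0 < γ * lam 0 := by positivity
        have hd2 : 0 < (1 + α) * (1 + α ^ 2) := by positivity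
        rw [ge_iff_le, div_le_div_iff₀ hd1 hd2] at h1
        exact h1
      have hB1 : α * (γ * lam 0) ≤ α * (γ * lam 0) * ((1 + α ^ 2) * t0 ^ 2) :=
        le_mul_of_one_le_right (by positivity) hc1
      have hB : εt * (1 + α) ≤ α * γ * lam 0 * t0 ^ 2 := by
        have hC := le_trans h1' hB1
        have hC' : (εt * (1 + α)) * (1 + α ^ 2) ≤ (α * γ * lam 0 * t0 ^ 2) * (1 + α ^ 2) := by
          linarith [hC]
        exact le_of_mul_le_mul_right hC' (by positivity)
      have stepA : (1 - γ) * (lam 0 * |t0|) * Real.sqrt (1 - t0 ^ 2) ≤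
          (1 - γ) * (lam 0 * |t0|) * (α * |t0|) :=
        mul_le_mul_of_nonneg_left hs1le hLnn
      have stepA' : (1 - γ) * (lam 0 * |t0|) * Real.sqrt (1 - t0 ^ 2) ≤
          α * ((1 - γ) * (lam 0 * t0 ^ 2)) := by
        calc (1 - γ) * (lam 0 * |t0|) * Real.sqrt (1 - t0 ^ 2)
            ≤ (1 - γ) * (lam 0 * |t0|) * (α * |t0|) := stepA
          _ = α * ((1 - γ) * (lam 0 * |t0| ^ 2)) := by ring
          _ = α * ((1 - γ) * (lam 0 * t0 ^ 2)) := by rw [sq_abs]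
      rw [div_mul_eq_mul_div, one_mul, div_le_iff₀ hα]
      have hNα := mul_le_mul_of_nonneg_right hNlow hα.le
      linarith [stepA', hB, hNα]
    · -- Part 2
      intro hRb hRa
      right
      rw [hRqθ] at hRb
      have hβ : 0 < β := lt_trans hα hαβ
      set lmax : ℝ := Finset.univ.sup' Finset.univ_nonempty lam with hlmaxdef
      have hlmax0 : lam 0 ≤ lmax := Finset.le_sup' lam (Finset.mem_univ 0)
      have hlmaxpos : 0 < lmax := lt_of_lt_of_le hl0 hlmax0
      have hc2 : 1 ≤ (1 + β ^ 2) * t0 ^ 2 := by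
        have hβ2 := (Real.le_sqrt (by positivity) (by positivity)).mp hRb
        rw [le_div_iff₀ h1mc] at hβ2
        have h3 := mul_le_mul_of_nonneg_right hβ2 (sq_nonneg β)
        have h4 : (1/β) ^ 2 * (1 - t0 ^ 2) * β ^ 2 = 1 - t0 ^ 2 := by
          have hβne : β ≠ 0 := ne_of_gt hβ
          field_simp
        rw [h4] at h3
        linarith [h3]
      have hεt2 : εt * (2 * (1 + α) * (1 + β ^ 2)) ≤ α * lam 0 := by
        have hd2 : 0 < 2 * (1 + α) * (1 + β ^ 2) := by positivity
        rw [ge_iff_le, div_le_div_iff₀ hl0 hd2] at h2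
        exact h2
      have hεt3 : εt * (2 * (1 + α)) ≤ α * (lam 0 * t0 ^ 2) := by
        have hB1 : α * lam 0 ≤ α * lam 0 * ((1 + β ^ 2) * t0 ^ 2) :=
          le_mul_of_one_le_right (by positivity) hc2
        have hC := le_trans hεt2 hB1
        have hC' : (εt * (2 * (1 + α))) * (1 + β ^ 2) ≤ (α * (lam 0 * t0 ^ 2)) * (1 + β ^ 2) := by
          linarith [hC]
        exact le_of_mul_le_mul_right hC' (by positivity)
      have hKD : Real.sqrt D2 ≤ lmax * (1 - t0 ^ 2) + εt := by
        have hmink := sqrt_sum_add_sq_le (Finset.univ.erase 0)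
          (fun j => lam j * (dotp (v j) θ) ^ 2) e
        have hf : Real.sqrt (∑ j ∈ Finset.univ.erase 0, (lam j * (dotp (v j) θ) ^ 2) ^ 2) ≤
            lmax * (1 - t0 ^ 2) := by
          rw [Real.sqrt_le_iff]
          constructor
          · positivity
          · calc ∑ j ∈ Finset.univ.erase 0, (lam j * (dotp (v j) θ) ^ 2) ^ 2
                ≤ (∑ j ∈ Finset.univ.erase 0, lam j * (dotp (v j) θ) ^ 2) ^ 2 :=
                  Finset.sum_sq_le_sq_sum_of_nonneg fun j _ =>
                    mul_nonneg (hlam j) (sq_nonneg _)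
              _ ≤ (lmax * (1 - t0 ^ 2)) ^ 2 := by
                  apply pow_le_pow_left₀ (Finset.sum_nonneg fun j _ =>
                    mul_nonneg (hlam j) (sq_nonneg _))
                  rw [← hsumoff, Finset.mul_sum]
                  exact Finset.sum_le_sum fun j _ => mul_le_mul_of_nonneg_right
                    (Finset.le_sup' lam (Finset.mem_univ j)) (sq_nonneg _)
        calc Real.sqrt D2 ≤ _ := hmink
          _ ≤ lmax * (1 - t0 ^ 2) + εt := add_le_add hf hEoff
      have hRsq : (Rq v θ) ^ 2 = t0 ^ 2 / (1 - t0 ^ 2) := by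
        rw [hRqθ]; exact Real.sq_sqrt (by positivity)
      rw [hRsq, kappaq]
      rw [← hlmaxdef]
      have hAeq : t0 ^ 2 / (1 - t0 ^ 2) / (2 * (lmax / lam 0)) =
          lam 0 * t0 ^ 2 / (2 * lmax * (1 - t0 ^ 2)) := by
        field_simp
      rw [hAeq]
      rcases le_total (lam 0 * t0 ^ 2 / (2 * lmax * (1 - t0 ^ 2))) (1 / α) with hmin | hmin
      · rw [min_eq_left hmin]
        have hmin' : α * (lam 0 * t0 ^ 2) ≤ 2 * lmax * (1 - t0 ^ 2) := by
          rw [div_le_div_iff₀ (by positivity) hα] at hmin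
          linarith [hmin]
        apply main _ _ (by positivity) hKD
        rw [div_mul_eq_mul_div, div_le_iff₀ (by positivity : (0:ℝ) < 2 * lmax * (1 - t0 ^ 2))]
        set P : ℝ := lam 0 * t0 ^ 2 with hPdef
        set Q : ℝ := lmax * (1 - t0 ^ 2) with hQdef
        have hQpos : 0 < Q := by rw [hQdef]; positivity
        have hmin2 : α * P ≤ 2 * Q := by rw [hQdef]; linarith [hmin']
        have k1 : εt * (2 * (1 + α)) * P ≤ (2 * Q) * P :=
          le_trans (mul_le_mul_of_nonneg_right hεt3 hdpos.le)
            (mul_le_mul_of_nonneg_right hmin2 hdpos.le)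
        have k2 : εt * (2 * (1 + α)) * (2 * Q) ≤ α * P * (2 * Q) := by
          have := mul_le_mul_of_nonneg_right hεt3 (by positivity : (0:ℝ) ≤ 2 * Q)
          linarith [this]
        have k3 : (P - εt) * (2 * Q) ≤ N * (2 * Q) :=
          mul_le_mul_of_nonneg_right hNlow (by positivity)
        have hsum : (εt * P + 2 * εt * Q) * (2 * (1 + α)) ≤ (P * Q) * (2 * (1 + α)) := by
          linarith [k1, k2]
        have hC : εt * P + 2 * εt * Q ≤ P * Q :=
          le_of_mul_le_mul_right hsum (by positivity)
        have hgoal : P * (Q + εt) ≤ N * (2 * Q) := by linarith [hC, k3]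
        calc P * (Q + εt) ≤ N * (2 * Q) := hgoal
          _ = N * (2 * lmax * (1 - t0 ^ 2)) := by rw [hQdef]; ring
      · rw [min_eq_right hmin]
        have hmin' : 2 * lmax * (1 - t0 ^ 2) ≤ α * (lam 0 * t0 ^ 2) := by
          rw [div_le_div_iff₀ hα (by positivity)] at hmin
          linarith [hmin]
        apply main _ _ (by positivity) hKD
        rw [div_mul_eq_mul_div, one_mul, div_le_iff₀ hα]
        linarith [hεt3, hmin', mul_le_mul_of_nonneg_right hNlow hα.le]

end
end

section
/- Fix α, β ∈ (0,1) and p > 1, and assume ℓ ≥ 1. Assume λ̃_{i*} = max_i λ̃_i > 0 for some index i*, ‖Ẽ(I,u,u)‖ ≤ ε̃ for every unit u ∈ ℝ^k, ‖Ẽ(I,u,u)‖ ≤ ε̃/p for every unit u with ⟨v_{i*},u⟩² ≥ 1 − (3ε̃/λ̃_{i*})², and ‖Ẽ‖_F ≤ ε̃_F. Suppose ε̃ ≤ min{α/(5√k + 7), (1−β)/7}·λ̃_{i*} and ε̃_F ≤ √ℓ·((1−β)/(2β))·λ̃_{i*}. Then every unit vector θ ∈ ℝ^k satisfying ⟨v_{i*},θ⟩²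 ≥ 1 − (3ε̃/(p·λ̃_{i*}))² and T̃(θ,θ,θ) ≥ λ̃_{i*} − (27·(ε̃/(p·λ̃_{i*}))² + 2)·ε̃/p also satisfies the stopping condition |T̃(θ,θ,θ)| ≥ max{(β/√ℓ)·‖T̃‖_F, ‖T̃(I,I,θ)‖_F/(1+α)}. -/
open scoped BigOperators

noncomputable section

/-- The full array of the tensor `T̃ = ∑ i, λ̃ i • (v i)^⊗3 + Ẽ`. -/
def Tarr {k : ℕ} (lam : Fin k → ℝ) (v : Fin k → Fin k → ℝ) (E : Tensor3 k) :
    Tensor3 k :=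
  fun a b c => (∑ i, lam i * (v i a * (v i b * v i c))) + E a b c

/-- Frobenius norm of a matrix. -/
def frobM {k : ℕ} (M : Matrix (Fin k) (Fin k) ℝ) : ℝ :=
  Real.sqrt (∑ a, ∑ b, (M a b) ^ 2)

/-- `A(I,I,u)` as a matrix. -/
def tmat {k : ℕ} (A : Tensor3 k) (u : Fin k → ℝ) : Matrix (Fin k) (Fin k) ℝ :=
  Matrix.of fun a b => ∑ c, A a b c * u c

/-- Frobenius norm of a third-order tensor: `(∑ i ‖A(I,I,e_i)‖_F²)^{1/2}`. -/
def frobT {k : ℕ} (A : Tensor3 k) : ℝ :=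
  Real.sqrt (∑ c, (frobM (tmat A (Pi.single c 1))) ^ 2)

/-- `ℓ`, the number of strictly positive `λ̃ i`. -/
def ells {k : ℕ} (lam : Fin k → ℝ) : ℕ :=
  (Finset.univ.filter fun i : Fin k => 0 < lam i).card

/-- `λ̃_avg = ((1/ℓ) ∑ i, λ̃ i²)^{1/2}`. -/
def lavg {k : ℕ} (lam : Fin k → ℝ) : ℝ :=
  Real.sqrt ((1 / (ells lam : ℝ)) * ∑ i, (lam i) ^ 2)


namespace StmtAux
variable {k : ℕ}

lemma sum_rotate {ι₁ ι₂ ι₃ : Type*} [Fintype ι₁] [Fintype ι₂] [Fintype ι₃]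
    (f : ι₁ → ι₂ → ι₃ → ℝ) :
    ∑ x, ∑ y, ∑ z, f x y z = ∑ y, ∑ z, ∑ x, f x y z := by
  rw [Finset.sum_comm]
  exact Finset.sum_congr rfl fun y _ => Finset.sum_comm

lemma sqrt_add_le {ι : Type*} [Fintype ι] (f g : ι → ℝ) :
    Real.sqrt (∑ i, (f i + g i) ^ 2) ≤ Real.sqrt (∑ i, f i ^ 2) + Real.sqrt (∑ i, g i ^ 2) := by
  have key : ∀ h : ι → ℝ, Real.sqrt (∑ i, h i ^ 2) = ‖(WithLp.equiv 2 (ι → ℝ)).symm h‖ := by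
    intro h
    rw [EuclideanSpace.norm_eq]
    simp [Real.norm_eq_abs, sq_abs]
  calc Real.sqrt (∑ i, (f i + g i) ^ 2) = ‖(WithLp.equiv 2 (ι → ℝ)).symm (f + g)‖ := key (f + g)
    _ = ‖(WithLp.equiv 2 (ι → ℝ)).symm f + (WithLp.equiv 2 (ι → ℝ)).symm g‖ := by
        rfl
    _ ≤ _ := by rw [key f, key g]; exact norm_add_le _ _

lemma sqrt2_add_le (f g : Fin k → Fin k → ℝ) :
    Real.sqrt (∑ a, ∑ b, (f a b + g a b) ^ 2)
      ≤ Real.sqrt (∑ a, ∑ b, f a b ^ 2) + Real.sqrt (∑ a, ∑ b, g a b ^ 2) := by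
  have := sqrt_add_le (ι := Fin k × Fin k) (fun p => f p.1 p.2) (fun p => g p.1 p.2)
  simpa [Fintype.sum_prod_type] using this

lemma sqrt3_add_le (f g : Fin k → Fin k → Fin k → ℝ) :
    Real.sqrt (∑ a, ∑ b, ∑ c, (f a b c + g a b c) ^ 2)
      ≤ Real.sqrt (∑ a, ∑ b, ∑ c, f a b c ^ 2) + Real.sqrt (∑ a, ∑ b, ∑ c, g a b c ^ 2) := by
  have := sqrt_add_le (ι := Fin k × Fin k × Fin k)
    (fun p => f p.1 p.2.1 p.2.2) (fun p => g p.1 p.2.1 p.2.2)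
  simpa [Fintype.sum_prod_type] using this

lemma abs_dotp_le (u w : Fin k → ℝ) : |dotp u w| ≤ enorm' u * enorm' w := by
  rw [abs_le]
  refine ⟨?_, Real.sum_mul_le_sqrt_mul_sqrt _ _ _⟩
  have h := Real.sum_mul_le_sqrt_mul_sqrt Finset.univ (fun i => -u i) w
  simp only [neg_mul, neg_sq] at h
  rw [Finset.sum_neg_distrib] at h
  unfold enorm' dotp
  linarith

lemma enorm'_nonneg (u : Fin k → ℝ) : 0 ≤ enorm' u := Real.sqrt_nonneg _

lemma sq_enorm' (u : Fin k → ℝ) : enorm' u ^ 2 = ∑ i, u i ^ 2 :=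
  Real.sq_sqrt (by positivity)

lemma enorm'_scale (s : ℝ) (u : Fin k → ℝ) :
    enorm' (fun i => s * u i) = |s| * enorm' u := by
  unfold enorm'
  rw [show ∑ i, (s * u i) ^ 2 = s ^ 2 * ∑ i, u i ^ 2 by
    rw [Finset.mul_sum]; exact Finset.sum_congr rfl fun i _ => by ring]
  rw [Real.sqrt_mul (sq_nonneg s), Real.sqrt_sq_eq_abs]

lemma enorm'_sub_le (p q : Fin k → ℝ) :
    enorm' (fun i => p i - q i) ≤ enorm' p + enorm' q := by
  have h := sqrt_add_le p (fun i => -q i)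
  simp only [neg_sq] at h
  unfold enorm'
  simpa [sub_eq_add_neg] using h

lemma delta_of_orth (v : Fin k → Fin k → ℝ)
    (horth : ∀ i j, dotp (v i) (v j) = if i = j then 1 else 0) :
    ∀ a b, ∑ i, v i a * v i b = if a = b then 1 else 0 := by
  have h1 : (Matrix.of fun i a => v i a) * (Matrix.of fun i a => v i a).transpose = 1 := by
    ext i j
    simpa [Matrix.mul_apply, Matrix.one_apply, dotp] using horth i j
  have h2 := mul_eq_one_comm.mp h1
  intro a b
  have := congrFun (congrFun h2 a) b
  simpa [Matrix.mul_apply, Matrix.one_apply] using this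

lemma parseval (v : Fin k → Fin k → ℝ)
    (horth : ∀ i j, dotp (v i) (v j) = if i = j then 1 else 0) (θ : Fin k → ℝ) :
    ∑ i, (dotp (v i) θ) ^ 2 = ∑ a, θ a ^ 2 := by
  have hdel := delta_of_orth v horth
  calc ∑ i, (dotp (v i) θ) ^ 2
      = ∑ i, ∑ a, ∑ b, (θ a * θ b) * (v i a * v i b) := by
        refine Finset.sum_congr rfl fun i _ => ?_
        rw [sq, dotp, Finset.sum_mul_sum]
        exact Finset.sum_congr rfl fun a _ => Finset.sum_congr rfl fun b _ => by ring
    _ = ∑ a, ∑ b, (θ a * θ b) * ∑ i, v i a * v i b := by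
        rw [sum_rotate]
        refine Finset.sum_congr rfl fun a _ => Finset.sum_congr rfl fun b _ => ?_
        rw [Finset.mul_sum]
    _ = ∑ a, θ a ^ 2 := by
        refine Finset.sum_congr rfl fun a _ => ?_
        simp [hdel, mul_ite, Finset.sum_ite_eq]
        ring

lemma triple_dot (x y z x' y' z' : Fin k → ℝ) :
    dotp x x' * (dotp y y' * dotp z z')
      = ∑ a, ∑ b, ∑ c, (x a * x' a) * ((y b * y' b) * (z c * z' c)) := by
  unfold dotp
  calc (∑ a, x a * x' a) * ((∑ b, y b * y' b) * (∑ c, z c * z' c))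
      = (∑ a, x a * x' a) * (∑ b, ∑ c, (y b * y' b) * (z c * z' c)) := by
        rw [Finset.sum_mul_sum]
    _ = ∑ a, (x a * x' a) * (∑ b, ∑ c, (y b * y' b) * (z c * z' c)) := Finset.sum_mul _ _ _
    _ = ∑ a, ∑ b, ∑ c, (x a * x' a) * ((y b * y' b) * (z c * z' c)) := by
        refine Finset.sum_congr rfl fun a _ => ?_
        rw [Finset.mul_sum]
        refine Finset.sum_congr rfl fun b _ => ?_
        rw [Finset.mul_sum]

lemma double_dot (x y x' y' : Fin k → ℝ) :
    dotp x x' * dotp y y' = ∑ a, ∑ b, (x a * x' a) * (y b * y' b) :=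
  Finset.sum_mul_sum _ _ _ _

lemma signal_frob_sq (lam : Fin k → ℝ) (v : Fin k → Fin k → ℝ)
    (horth : ∀ i j, dotp (v i) (v j) = if i = j then 1 else 0) :
    ∑ c, ∑ a, ∑ b, (∑ i, lam i * (v i a * (v i b * v i c))) ^ 2 = ∑ i, (lam i) ^ 2 := by
  calc ∑ c, ∑ a, ∑ b, (∑ i, lam i * (v i a * (v i b * v i c))) ^ 2
      = ∑ c, ∑ a, ∑ b, ∑ i, ∑ j,
          (lam i * lam j) * ((v i c * v j c) * ((v i a * v j a) * (v i b * v j b))) := by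
        refine Finset.sum_congr rfl fun c _ => Finset.sum_congr rfl fun a _ =>
          Finset.sum_congr rfl fun b _ => ?_
        rw [sq, Finset.sum_mul_sum]
        exact Finset.sum_congr rfl fun i _ => Finset.sum_congr rfl fun j _ => by ring
    _ = ∑ c, ∑ a, ∑ i, ∑ j, ∑ b,
          (lam i * lam j) * ((v i c * v j c) * ((v i a * v j a) * (v i b * v j b))) := by
        refine Finset.sum_congr rfl fun c _ => Finset.sum_congr rfl fun a _ => by rw [sum_rotate]
    _ = ∑ c, ∑ i, ∑ j, ∑ a, ∑ b,
          (lam i * lam j) * ((v i c * v j c) * ((v i a * v j a) * (v i b * v j b))) := by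
        refine Finset.sum_congr rfl fun c _ => by rw [sum_rotate]
    _ = ∑ i, ∑ j, ∑ c, ∑ a, ∑ b,
          (lam i * lam j) * ((v i c * v j c) * ((v i a * v j a) * (v i b * v j b))) := by
        rw [sum_rotate]
    _ = ∑ i, ∑ j, (lam i * lam j) *
          (dotp (v i) (v j) * (dotp (v i) (v j) * dotp (v i) (v j))) := by
        refine Finset.sum_congr rfl fun i _ => Finset.sum_congr rfl fun j _ => ?_
        rw [triple_dot]
        rw [Finset.mul_sum]
        refine Finset.sum_congr rfl fun c _ => ?_
        rw [Finset.mul_sum]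
        refine Finset.sum_congr rfl fun a _ => ?_
        rw [Finset.mul_sum]
    _ = ∑ i, (lam i) ^ 2 := by
        refine Finset.sum_congr rfl fun i _ => ?_
        rw [Finset.sum_eq_single i]
        · rw [horth i i]; simp; ring
        · intro j _ hj
          rw [horth i j]
          simp [Ne.symm hj]
        · simp

lemma signal_mat_sq (w : Fin k → ℝ) (v : Fin k → Fin k → ℝ)
    (horth : ∀ i j, dotp (v i) (v j) = if i = j then 1 else 0) :
    ∑ a, ∑ b, (∑ i, w i * (v i a * v i b)) ^ 2 = ∑ i, (w i) ^ 2 := by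
  calc ∑ a, ∑ b, (∑ i, w i * (v i a * v i b)) ^ 2
      = ∑ a, ∑ b, ∑ i, ∑ j, (w i * w j) * ((v i a * v j a) * (v i b * v j b)) := by
        refine Finset.sum_congr rfl fun a _ => Finset.sum_congr rfl fun b _ => ?_
        rw [sq, Finset.sum_mul_sum]
        exact Finset.sum_congr rfl fun i _ => Finset.sum_congr rfl fun j _ => by ring
    _ = ∑ a, ∑ i, ∑ j, ∑ b, (w i * w j) * ((v i a * v j a) * (v i b * v j b)) := by
        refine Finset.sum_congr rfl fun a _ => by rw [sum_rotate]
    _ = ∑ i, ∑ j, ∑ a, ∑ b, (w i * w j) * ((v i a * v j a) * (v i b * v j b)) := by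
        rw [sum_rotate]
    _ = ∑ i, ∑ j, (w i * w j) * (dotp (v i) (v j) * dotp (v i) (v j)) := by
        refine Finset.sum_congr rfl fun i _ => Finset.sum_congr rfl fun j _ => ?_
        rw [double_dot]
        rw [Finset.mul_sum]
        refine Finset.sum_congr rfl fun a _ => ?_
        rw [Finset.mul_sum]
    _ = ∑ i, (w i) ^ 2 := by
        refine Finset.sum_congr rfl fun i _ => ?_
        rw [Finset.sum_eq_single i]
        · rw [horth i i]; simp; ring
        · intro j _ hj
          rw [horth i j]
          simp [Ne.symm hj]
        · simp

lemma frobT_eq (A : Tensor3 k) :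
    frobT A = Real.sqrt (∑ c, ∑ a, ∑ b, (A a b c) ^ 2) := by
  unfold frobT
  congr 1
  refine Finset.sum_congr rfl fun c _ => ?_
  rw [frobM, Real.sq_sqrt (by positivity)]
  refine Finset.sum_congr rfl fun a _ => Finset.sum_congr rfl fun b _ => ?_
  congr 1
  simp [tmat, Pi.single_apply, mul_ite]

lemma signal_tapp (lam : Fin k → ℝ) (v : Fin k → Fin k → ℝ) (θ : Fin k → ℝ) :
    ∑ a, ∑ b, ∑ c, (∑ i, lam i * (v i a * (v i b * v i c))) * θ a * θ b * θ c
      = ∑ i, lam i * (dotp (v i) θ * (dotp (v i) θ * dotp (v i) θ)) := by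
  calc ∑ a, ∑ b, ∑ c, (∑ i, lam i * (v i a * (v i b * v i c))) * θ a * θ b * θ c
      = ∑ a, ∑ b, ∑ c, ∑ i, lam i * ((v i a * θ a) * ((v i b * θ b) * (v i c * θ c))) := by
        refine Finset.sum_congr rfl fun a _ => Finset.sum_congr rfl fun b _ =>
          Finset.sum_congr rfl fun c _ => ?_
        rw [Finset.sum_mul, Finset.sum_mul, Finset.sum_mul]
        exact Finset.sum_congr rfl fun i _ => by ring
    _ = ∑ a, ∑ b, ∑ i, ∑ c, lam i * ((v i a * θ a) * ((v i b * θ b) * (v i c * θ c))) :=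
        Finset.sum_congr rfl fun a _ => Finset.sum_congr rfl fun b _ => Finset.sum_comm
    _ = ∑ a, ∑ i, ∑ b, ∑ c, lam i * ((v i a * θ a) * ((v i b * θ b) * (v i c * θ c))) :=
        Finset.sum_congr rfl fun a _ => Finset.sum_comm
    _ = ∑ i, ∑ a, ∑ b, ∑ c, lam i * ((v i a * θ a) * ((v i b * θ b) * (v i c * θ c))) :=
        Finset.sum_comm
    _ = ∑ i, lam i * (dotp (v i) θ * (dotp (v i) θ * dotp (v i) θ)) := by
        refine Finset.sum_congr rfl fun i _ => ?_
        rw [triple_dot]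
        rw [Finset.mul_sum]
        refine Finset.sum_congr rfl fun a _ => ?_
        rw [Finset.mul_sum]
        refine Finset.sum_congr rfl fun b _ => ?_
        rw [Finset.mul_sum]

lemma tapp_decomp (lam : Fin k → ℝ) (v : Fin k → Fin k → ℝ) (E : Tensor3 k) (θ : Fin k → ℝ) :
    tapp (Tarr lam v E) θ θ θ
      = (∑ i, lam i * (dotp (v i) θ * (dotp (v i) θ * dotp (v i) θ))) + tapp E θ θ θ := by
  unfold tapp Tarr
  rw [← signal_tapp lam v θ]
  rw [← Finset.sum_add_distrib]
  refine Finset.sum_congr rfl fun a _ => ?_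
  rw [← Finset.sum_add_distrib]
  refine Finset.sum_congr rfl fun b _ => ?_
  rw [← Finset.sum_add_distrib]
  refine Finset.sum_congr rfl fun c _ => by ring

lemma tapp_eq_dot_tvec (E : Tensor3 k) (θ : Fin k → ℝ) :
    tapp E θ θ θ = ∑ a, θ a * tvec E θ a := by
  unfold tapp tvec
  refine Finset.sum_congr rfl fun a _ => ?_
  rw [Finset.mul_sum]
  refine Finset.sum_congr rfl fun b _ => ?_
  rw [Finset.mul_sum]
  exact Finset.sum_congr rfl fun c _ => by ring

lemma tmat_decomp (lam : Fin k → ℝ) (v : Fin k → Fin k → ℝ) (E : Tensor3 k) (θ : Fin k → ℝ) :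
    ∀ a b, tmat (Tarr lam v E) θ a b
      = (∑ i, (lam i * dotp (v i) θ) * (v i a * v i b)) + tmat E θ a b := by
  intro a b
  show (∑ c, ((∑ i, lam i * (v i a * (v i b * v i c))) + E a b c) * θ c)
      = (∑ i, (lam i * dotp (v i) θ) * (v i a * v i b)) + ∑ c, E a b c * θ c
  calc ∑ c, ((∑ i, lam i * (v i a * (v i b * v i c))) + E a b c) * θ c
      = ∑ c, ((∑ i, lam i * (v i a * (v i b * v i c))) * θ c + E a b c * θ c) :=
        Finset.sum_congr rfl fun c _ => by ring
    _ = (∑ c, (∑ i, lam i * (v i a * (v i b * v i c))) * θ c) + ∑ c, E a b c * θ c :=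
        Finset.sum_add_distrib
    _ = (∑ i, (lam i * dotp (v i) θ) * (v i a * v i b)) + ∑ c, E a b c * θ c := by
        congr 1
        calc ∑ c, (∑ i, lam i * (v i a * (v i b * v i c))) * θ c
            = ∑ c, ∑ i, (lam i * (v i a * (v i b * v i c))) * θ c :=
              Finset.sum_congr rfl fun c _ => Finset.sum_mul _ _ _
          _ = ∑ i, ∑ c, (lam i * (v i a * (v i b * v i c))) * θ c := Finset.sum_comm
          _ = ∑ i, (lam i * dotp (v i) θ) * (v i a * v i b) := by
              refine Finset.sum_congr rfl fun i _ => ?_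
              rw [dotp, Finset.mul_sum, Finset.sum_mul]
              exact Finset.sum_congr rfl fun c _ => by ring

lemma tvec_scale (E : Tensor3 k) (s : ℝ) (u : Fin k → ℝ) :
    tvec E (fun i => s * u i) = fun a => s ^ 2 * tvec E u a := by
  funext a
  unfold tvec
  rw [Finset.mul_sum]
  refine Finset.sum_congr rfl fun b _ => ?_
  rw [Finset.mul_sum]
  exact Finset.sum_congr rfl fun c _ => by ring

lemma tvec_le (E : Tensor3 k) (εt : ℝ)
    (hE1 : ∀ u : Fin k → ℝ, enorm' u = 1 → enorm' (tvec E u) ≤ εt)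
    (u : Fin k → ℝ) :
    enorm' (tvec E u) ≤ εt * ∑ i, u i ^ 2 := by
  rcases eq_or_lt_of_le (enorm'_nonneg u) with h0 | hpos
  · have hsum : ∑ i, u i ^ 2 = 0 := by
      have := sq_enorm' u
      rw [← h0] at this
      simpa using this.symm
    have hu : ∀ i, u i = 0 := by
      intro i
      have := (Finset.sum_eq_zero_iff_of_nonneg (fun i _ => sq_nonneg (u i))).mp hsum i
        (Finset.mem_univ i)
      exact pow_eq_zero_iff (by norm_num) |>.mp this
    have hz : tvec E u = fun _ => 0 := by
      funext a
      unfold tvec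
      refine Finset.sum_eq_zero fun b _ => Finset.sum_eq_zero fun c _ => by rw [hu b]; ring
    rw [hz, hsum]
    simp [enorm']
  · set s := enorm' u with hs
    have hs0 : s ≠ 0 := ne_of_gt hpos
    set w : Fin k → ℝ := fun i => s⁻¹ * u i with hw
    have hw1 : enorm' w = 1 := by
      rw [hw, enorm'_scale, abs_of_pos (inv_pos.mpr hpos), ← hs]
      field_simp
    have huw : u = fun i => s * w i := by
      funext i
      rw [hw]
      field_simp
    have hsq : s ^ 2 = ∑ i, u i ^ 2 := sq_enorm' u
    calc enorm' (tvec E u) = enorm' (fun a => s ^ 2 * tvec E w a) := by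
          rw [huw, tvec_scale]
      _ = |s ^ 2| * enorm' (tvec E w) := enorm'_scale _ _
      _ = s ^ 2 * enorm' (tvec E w) := by rw [abs_of_nonneg (sq_nonneg s)]
      _ ≤ s ^ 2 * εt := mul_le_mul_of_nonneg_left (hE1 w hw1) (sq_nonneg s)
      _ = εt * ∑ i, u i ^ 2 := by rw [← hsq]; ring

lemma tmat_col (E : Tensor3 k) (hE : Symm3 E) (θ : Fin k → ℝ) (b₀ : Fin k) :
    ∀ a, tmat E θ a b₀ = (1 / 4) * (tvec E (fun t => (Pi.single b₀ 1 : Fin k → ℝ) t + θ t) a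
      - tvec E (fun t => (Pi.single b₀ 1 : Fin k → ℝ) t - θ t) a) := by
  intro a
  set s : Fin k → ℝ := fun t => (Pi.single b₀ 1 : Fin k → ℝ) t with hsdef
  have key : tvec E (fun t => s t + θ t) a - tvec E (fun t => s t - θ t) a
      = 2 * (∑ b, ∑ c, E a b c * s b * θ c) + 2 * (∑ b, ∑ c, E a b c * θ b * s c) := by
    unfold tvec
    rw [← Finset.sum_sub_distrib]
    rw [Finset.mul_sum, Finset.mul_sum, ← Finset.sum_add_distrib]
    refine Finset.sum_congr rfl fun b _ => ?_
    rw [← Finset.sum_sub_distrib]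
    rw [Finset.mul_sum, Finset.mul_sum, ← Finset.sum_add_distrib]
    exact Finset.sum_congr rfl fun c _ => by ring
  have h1 : (∑ b, ∑ c, E a b c * s b * θ c) = ∑ c, E a b₀ c * θ c := by
    rw [Finset.sum_comm]
    refine Finset.sum_congr rfl fun c _ => ?_
    rw [Finset.sum_eq_single b₀]
    · simp [hsdef]
    · intro b _ hb
      simp [hsdef, Pi.single_apply, hb]
    · simp
  have h2 : (∑ b, ∑ c, E a b c * θ b * s c) = ∑ c, E a b₀ c * θ c := by
    calc ∑ b, ∑ c, E a b c * θ b * s c = ∑ b, E a b b₀ * θ b := by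
          refine Finset.sum_congr rfl fun b _ => ?_
          rw [Finset.sum_eq_single b₀]
          · simp [hsdef]
          · intro c _ hc
            simp [hsdef, Pi.single_apply, hc]
          · simp
      _ = ∑ c, E a b₀ c * θ c := by
          refine Finset.sum_congr rfl fun b _ => ?_
          rw [(hE a b b₀).2]
  show (∑ c, E a b₀ c * θ c) = _
  rw [key, h1, h2]
  ring

end StmtAux

set_option maxHeartbeats 1000000 in
/-- **The stopping condition is satisfied near the top eigenvector.**
Fix `α, β ∈ (0,1)`, `p > 1`, and suppose `λ̃_{i*} = max_i λ̃_i > 0`,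
`ε̃ ≤ min{α/(5√k+7), (1−β)/7} λ̃_{i*}` and `ε̃_F ≤ √ℓ((1−β)/(2β)) λ̃_{i*}`.  Then every
unit vector `θ` with `⟨v_{i*},θ⟩² ≥ 1 − (3ε̃/(pλ̃_{i*}))²` and
`T̃(θ,θ,θ) ≥ λ̃_{i*} − (27(ε̃/(pλ̃_{i*}))² + 2)ε̃/p` satisfies the stopping condition
`|T̃(θ,θ,θ)| ≥ max{(β/√ℓ)‖T̃‖_F, ‖T̃(I,I,θ)‖_F/(1+α)}`. -/
theorem stmt19 {k : ℕ}
    (lam : Fin k → ℝ) (hlam : ∀ i, 0 ≤ lam i)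
    (v : Fin k → Fin k → ℝ)
    (horth : ∀ i j, dotp (v i) (v j) = if i = j then 1 else 0)
    (E : Tensor3 k) (hE : Symm3 E)
    (α β p : ℝ) (hα : α ∈ Set.Ioo (0 : ℝ) 1) (hβ : β ∈ Set.Ioo (0 : ℝ) 1)
    (hp : 1 < p)
    (hl : 1 ≤ ells lam)
    (istar : Fin k) (histar : ∀ i, lam i ≤ lam istar) (hpos : 0 < lam istar)
    (εt εtF : ℝ)
    (hE1 : ∀ u : Fin k → ℝ, enorm' u = 1 → enorm' (tvec E u) ≤ εt)
    (hE2 : ∀ u : Fin k → ℝ, enorm' u = 1 →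
      (dotp (v istar) u) ^ 2 ≥ 1 - (3 * εt / lam istar) ^ 2 →
      enorm' (tvec E u) ≤ εt / p)
    (hEF : frobT E ≤ εtF)
    (hεt : εt ≤ min (α / (5 * Real.sqrt k + 7)) ((1 - β) / 7) * lam istar)
    (hεF : εtF ≤ Real.sqrt (ells lam) * ((1 - β) / (2 * β)) * lam istar) :
    ∀ θ : Fin k → ℝ, enorm' θ = 1 →
      (dotp (v istar) θ) ^ 2 ≥ 1 - (3 * εt / (p * lam istar)) ^ 2 →
      tapp (Tarr lam v E) θ θ θ
          ≥ lam istar - (27 * (εt / (p * lam istar)) ^ 2 + 2) * (εt / p) →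
      |tapp (Tarr lam v E) θ θ θ|
        ≥ max ((β / Real.sqrt (ells lam)) * frobT (Tarr lam v E))
            (frobM (tmat (Tarr lam v E) θ) / (1 + α)) := by
  classical
  obtain ⟨hα0, hα1⟩ := hα
  obtain ⟨hβ0, hβ1⟩ := hβ
  intro θ hθ _ hT
  open StmtAux in
  set L := lam istar with hLdef
  -- basic positivity facts
  have hθsum : ∑ a, θ a ^ 2 = 1 := by
    have := StmtAux.sq_enorm' θ
    rw [hθ] at this
    simpa using this.symm
  have hcsum : ∑ i, (dotp (v i) θ) ^ 2 = 1 := by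
    rw [StmtAux.parseval v horth θ, hθsum]
  have hvunit : enorm' (v istar) = 1 := by
    have h1 : dotp (v istar) (v istar) = 1 := by simpa using horth istar istar
    unfold enorm'
    rw [show ∑ i, (v istar i) ^ 2 = dotp (v istar) (v istar) from
      Finset.sum_congr rfl fun i _ => sq (v istar i) ▸ rfl]
    rw [h1, Real.sqrt_one]
  have hε0 : 0 ≤ εt := le_trans (StmtAux.enorm'_nonneg _) (hE1 (v istar) hvunit)
  have hsqk0 : (0:ℝ) ≤ Real.sqrt k := Real.sqrt_nonneg _
  have hLβ : 7 * εt ≤ (1 - β) * L := by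
    have h := le_trans hεt (by
      have := min_le_right (α / (5 * Real.sqrt k + 7)) ((1 - β) / 7)
      exact mul_le_mul_of_nonneg_right this hpos.le)
    nlinarith
  have hLα : εt * (5 * Real.sqrt k + 7) ≤ α * L := by
    have h := le_trans hεt (by
      have := min_le_left (α / (5 * Real.sqrt k + 7)) ((1 - β) / 7)
      exact mul_le_mul_of_nonneg_right this hpos.le)
    have hD : (0:ℝ) < 5 * Real.sqrt k + 7 := by linarith
    rw [div_mul_eq_mul_div, le_div_iff₀ hD] at h
    linarith [h]
  -- lower bound on T(θ,θ,θ)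
  set T3 := tapp (Tarr lam v E) θ θ θ with hT3def
  have hp0 : (0:ℝ) < p := lt_trans one_pos hp
  have hq01 : 0 ≤ εt / (p * L) ∧ εt / (p * L) ≤ 1 / 7 := by
    constructor
    · positivity
    · rw [div_le_iff₀ (by positivity)]
      nlinarith [mul_nonneg (by linarith : (0:ℝ) ≤ p - 1) hpos.le, hLβ, hβ0, hpos]
  have hpen : (27 * (εt / (p * L)) ^ 2 + 2) * (εt / p) ≤ (125 / 49) * εt := by
    have h1 : 27 * (εt / (p * L)) ^ 2 + 2 ≤ 125 / 49 := by nlinarith [hq01.1, hq01.2]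
    have h2 : εt / p ≤ εt := by
      rw [div_le_iff₀ hp0]
      nlinarith
    have h3 : 0 ≤ εt / p := by positivity
    nlinarith
  have hT' : T3 ≥ L - (125 / 49) * εt := le_trans (by linarith) hT
  have hThalf : T3 ≥ (1 + β) / 2 * L := by nlinarith
  have hTpos : 0 < T3 := by nlinarith
  rw [ge_iff_le, abs_of_pos hTpos]
  refine max_le ?_ ?_
  · -- Frobenius-norm part
    have hSl1 : (1:ℝ) ≤ Real.sqrt (ells lam) := by
      rw [show (1:ℝ) = Real.sqrt 1 from (Real.sqrt_one).symm]
      exact Real.sqrt_le_sqrt (by exact_mod_cast hl)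
    have hSl0 : (0:ℝ) < Real.sqrt (ells lam) := lt_of_lt_of_le one_pos hSl1
    have hlamsum : ∑ i, (lam i) ^ 2 ≤ (ells lam : ℝ) * L ^ 2 := by
      have hru : ∑ i, (lam i) ^ 2
          = ∑ i ∈ Finset.univ.filter (fun i : Fin k => 0 < lam i), (lam i) ^ 2 := by
        refine (Finset.sum_subset (Finset.filter_subset _ _) ?_).symm
        intro i _ hi
        simp only [Finset.mem_filter, Finset.mem_univ, true_and, not_lt] at hi
        have : lam i = 0 := le_antisymm hi (hlam i)
        rw [this]; ring
      rw [hru]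
      have := Finset.sum_le_card_nsmul (Finset.univ.filter (fun i : Fin k => 0 < lam i))
        (fun i => (lam i) ^ 2) (L ^ 2)
        (fun i _ => pow_le_pow_left₀ (hlam i) (histar i) 2)
      rw [nsmul_eq_mul] at this
      exact this
    have hfrobS : Real.sqrt (∑ c, ∑ a, ∑ b,
        (∑ i, lam i * (v i a * (v i b * v i c))) ^ 2) ≤ Real.sqrt (ells lam) * L := by
      rw [StmtAux.signal_frob_sq lam v horth]
      calc Real.sqrt (∑ i, (lam i) ^ 2) ≤ Real.sqrt ((ells lam : ℝ) * L ^ 2) :=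
            Real.sqrt_le_sqrt hlamsum
        _ = Real.sqrt (ells lam) * L := by
            rw [Real.sqrt_mul (by positivity), Real.sqrt_sq hpos.le]
    have hfrobT : frobT (Tarr lam v E) ≤ Real.sqrt (ells lam) * L + εtF := by
      have heq : frobT (Tarr lam v E) = Real.sqrt (∑ c, ∑ a, ∑ b,
          ((∑ i, lam i * (v i a * (v i b * v i c))) + E a b c) ^ 2) := StmtAux.frobT_eq _
      rw [heq]
      have htri := StmtAux.sqrt3_add_le
        (fun c a b => ∑ i, lam i * (v i a * (v i b * v i c))) (fun c a b => E a b c)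
      refine le_trans htri ?_
      have hE' : Real.sqrt (∑ c, ∑ a, ∑ b, (E a b c) ^ 2) ≤ εtF := by
        rw [← StmtAux.frobT_eq]
        exact hEF
      exact add_le_add hfrobS hE'
    have hβS : 0 < β / Real.sqrt (ells lam) := by positivity
    calc β / Real.sqrt (ells lam) * frobT (Tarr lam v E)
        ≤ β / Real.sqrt (ells lam) *
            (Real.sqrt (ells lam) * L + Real.sqrt (ells lam) * ((1 - β) / (2 * β)) * L) := by
          refine mul_le_mul_of_nonneg_left (le_trans hfrobT ?_) hβS.le
          linarith
      _ = β * L + (1 - β) / 2 * L := by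
          field_simp
      _ ≤ T3 := by nlinarith
  · -- matrix part
    have hfmat : frobM (tmat (Tarr lam v E) θ) ≤ L + Real.sqrt k * εt := by
      have heq : frobM (tmat (Tarr lam v E) θ) = Real.sqrt (∑ a, ∑ b,
          ((∑ i, (lam i * dotp (v i) θ) * (v i a * v i b)) + tmat E θ a b) ^ 2) := by
        unfold frobM
        congr 1
        exact Finset.sum_congr rfl fun a _ => Finset.sum_congr rfl fun b _ => by
          rw [StmtAux.tmat_decomp lam v E θ a b]
      rw [heq]
      have htri := StmtAux.sqrt2_add_le
        (fun a b => ∑ i, (lam i * dotp (v i) θ) * (v i a * v i b)) (fun a b => tmat E θ a b)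
      refine le_trans htri (add_le_add ?_ ?_)
      · -- signal matrix
        rw [StmtAux.signal_mat_sq (fun i => lam i * dotp (v i) θ) v horth]
        have hb : ∑ i, (lam i * dotp (v i) θ) ^ 2 ≤ L ^ 2 := by
          calc ∑ i, (lam i * dotp (v i) θ) ^ 2
              ≤ ∑ i, L ^ 2 * (dotp (v i) θ) ^ 2 := by
                refine Finset.sum_le_sum fun i _ => ?_
                have h1 : lam i ^ 2 ≤ L ^ 2 := pow_le_pow_left₀ (hlam i) (histar i) 2
                rw [mul_pow]
                exact mul_le_mul_of_nonneg_right h1 (sq_nonneg _)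
            _ = L ^ 2 := by rw [← Finset.mul_sum, hcsum]; ring
        calc Real.sqrt (∑ i, (lam i * dotp (v i) θ) ^ 2) ≤ Real.sqrt (L ^ 2) :=
              Real.sqrt_le_sqrt hb
          _ = L := Real.sqrt_sq hpos.le
      · -- error matrix via polarization
        have hcol : ∀ b₀ : Fin k, ∑ a, (tmat E θ a b₀) ^ 2 ≤ εt ^ 2 := by
          intro b₀
          set s : Fin k → ℝ := fun t => (Pi.single b₀ 1 : Fin k → ℝ) t with hsdef
          have hs2 : ∑ t, s t ^ 2 = 1 := by
            simp [hsdef, Pi.single_apply, ite_pow, Finset.sum_ite_eq']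
          have hplus : ∑ t, (s t + θ t) ^ 2 + ∑ t, (s t - θ t) ^ 2 = 4 := by
            rw [← Finset.sum_add_distrib]
            calc ∑ t, ((s t + θ t) ^ 2 + (s t - θ t) ^ 2)
                = ∑ t, (2 * s t ^ 2 + 2 * θ t ^ 2) :=
                  Finset.sum_congr rfl fun t _ => by ring
              _ = 2 * (∑ t, s t ^ 2) + 2 * (∑ t, θ t ^ 2) := by
                  rw [Finset.sum_add_distrib, Finset.mul_sum, Finset.mul_sum]
              _ = 4 := by rw [hs2, hθsum]; norm_num
          have hcoleq : (fun a => tmat E θ a b₀)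
              = fun a => (1 / 4) * (tvec E (fun t => s t + θ t) a
                  - tvec E (fun t => s t - θ t) a) := by
            funext a
            exact StmtAux.tmat_col E hE θ b₀ a
          have hnorm : enorm' (fun a => tmat E θ a b₀) ≤ εt := by
            rw [hcoleq]
            rw [show (fun a => (1 / 4 : ℝ) * (tvec E (fun t => s t + θ t) a
                - tvec E (fun t => s t - θ t) a))
              = fun a => (1 / 4 : ℝ) * ((fun a => tvec E (fun t => s t + θ t) a
                - tvec E (fun t => s t - θ t) a) a) from rfl]
            rw [StmtAux.enorm'_scale]
            have h1 : enorm' (fun a => tvec E (fun t => s t + θ t) a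
                - tvec E (fun t => s t - θ t) a)
                ≤ enorm' (tvec E (fun t => s t + θ t)) + enorm' (tvec E (fun t => s t - θ t)) :=
              StmtAux.enorm'_sub_le _ _
            have h2 := StmtAux.tvec_le E εt hE1 (fun t => s t + θ t)
            have h3 := StmtAux.tvec_le E εt hE1 (fun t => s t - θ t)
            have habs : |(1 / 4 : ℝ)| = 1 / 4 := by norm_num
            rw [habs]
            nlinarith [StmtAux.enorm'_nonneg (tvec E (fun t => s t + θ t)),
              StmtAux.enorm'_nonneg (tvec E (fun t => s t - θ t))]
          have := StmtAux.sq_enorm' (fun a => tmat E θ a b₀)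
          rw [← this]
          exact pow_le_pow_left₀ (StmtAux.enorm'_nonneg _) hnorm 2
        have hsum2 : ∑ a, ∑ b, (tmat E θ a b) ^ 2 ≤ (k : ℝ) * εt ^ 2 := by
          rw [Finset.sum_comm]
          calc ∑ b, ∑ a, (tmat E θ a b) ^ 2 ≤ ∑ _b : Fin k, εt ^ 2 :=
                Finset.sum_le_sum fun b _ => hcol b
            _ = (k : ℝ) * εt ^ 2 := by
                rw [Finset.sum_const, Finset.card_univ, Fintype.card_fin, nsmul_eq_mul]
        calc Real.sqrt (∑ a, ∑ b, (tmat E θ a b) ^ 2) ≤ Real.sqrt ((k : ℝ) * εt ^ 2) :=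
              Real.sqrt_le_sqrt hsum2
          _ = Real.sqrt k * εt := by
              rw [Real.sqrt_mul (Nat.cast_nonneg k), Real.sqrt_sq hε0]
    rw [div_le_iff₀ (by linarith : (0:ℝ) < 1 + α)]
    have hfin : L + Real.sqrt k * εt ≤ T3 * (1 + α) := by
      have h1 : (1 + α) * (L - (125 / 49) * εt) ≤ (1 + α) * T3 :=
        mul_le_mul_of_nonneg_left hT' (by linarith)
      nlinarith [mul_nonneg hε0 hsqk0, mul_nonneg (le_of_lt (by linarith : (0:ℝ) < 1 - α)) hε0]
    linarith [hfmat, hfin]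

end
end
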